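/- arXiv:1401.4633 — 3 statements merged into one kernel-verified Lean document; each statement's English description precedes it below -/
import Mathlib

section
/- Let F be a field and f(x, r) = r^{ℓ+2} + Σ_{i=1}^{ℓ} x_i r^i with ℓ+2 not divisible by char(F). For any (Δx, Δr, Δt) ≠ (0,0,0) and any x, the polynomial g(r) = f(x+Δx, r+Δr) − f(x, r) − Δt in F[r] is a nonzero polynomial of degree at most ℓ+1. -/
open Polynomial Finset

/-- Algebraic core of AMD security: the difference polynomial
`g(r) = f(x+Δx, r+Δr) − f(x,r) − Δt` (with `f(x,r) = r^(ℓ+2) + ∑ x_i r^i`)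
is nonzero of degree at most `ℓ+1`, provided `char F ∤ ℓ+2` and the offset is nonzero. -/
theorem stmt_1 (F : Type*) [Field F] (ℓ : ℕ) (hℓ : 1 ≤ ℓ)
    (hchar : ¬ (ringChar F ∣ (ℓ + 2)))
    (x Δx : Fin ℓ → F) (Δr Δt : F)
    (hnz : ¬ (Δx = 0 ∧ Δr = 0 ∧ Δt = 0))
    (g : F[X])
    (hg : g = ((X + C Δr) ^ (ℓ + 2)
          + ∑ i : Fin ℓ, C (x i + Δx i) * (X + C Δr) ^ ((i : ℕ) + 1))
        - (X ^ (ℓ + 2) + ∑ i : Fin ℓ, C (x i) * X ^ ((i : ℕ) + 1))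
        - C Δt) :
    g ≠ 0 ∧ g.natDegree ≤ ℓ + 1 := by
  have hℓ2 : ((ℓ : F) + 2) ≠ 0 := by
    intro h
    apply hchar
    have := ringChar.charP F
    rw [← CharP.cast_eq_zero_iff F (ringChar F) (ℓ + 2)]
    push_cast
    exact h
  constructor
  · -- nonzero
    by_cases hr : Δr = 0
    · subst hr
      simp only [map_zero, add_zero] at hg
      have hsplit : ∀ i : Fin ℓ, C (x i + Δx i) * X ^ ((i : ℕ) + 1)
          = C (x i) * X ^ ((i : ℕ) + 1) + C (Δx i) * X ^ ((i : ℕ) + 1) := by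
        intro i; rw [map_add]; ring
      have hg' : g = (∑ i : Fin ℓ, C (Δx i) * X ^ ((i : ℕ) + 1)) - C Δt := by
        rw [hg]
        simp_rw [hsplit, Finset.sum_add_distrib]
        ring
      by_cases hx : Δx = 0
      · have ht : Δt ≠ 0 := fun h => hnz ⟨hx, rfl, h⟩
        subst hx
        simp only [Pi.zero_apply, map_zero, zero_mul, Finset.sum_const_zero, zero_sub] at hg'
        rw [hg']
        simp [ht]
      · obtain ⟨i, hi⟩ := Function.ne_iff.mp hx
        simp only [Pi.zero_apply] at hi
        intro h0
        rw [h0] at hg'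
        have hc := congrArg (fun p => Polynomial.coeff p ((i : ℕ) + 1)) hg'.symm
        simp only [coeff_zero, coeff_sub, finset_sum_coeff, coeff_C_mul, coeff_X_pow,
          coeff_C] at hc
        rw [Finset.sum_eq_single i] at hc
        · simp at hc
          exact hi hc
        · intro j _ hj
          have : ¬ ((i : ℕ) + 1 = (j : ℕ) + 1) := fun h => hj (Fin.ext (by omega))
          simp [this]
          intro h; exact absurd (Fin.ext h).symm hj
        · simp
    · intro h0
      rw [h0] at hg
      have hc := congrArg (fun p => Polynomial.coeff p (ℓ + 1)) hg.symm
      simp only [coeff_zero, coeff_sub, coeff_add, coeff_X_add_C_pow, finset_sum_coeff,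
        coeff_C_mul, coeff_X_pow, coeff_C] at hc
      rw [Finset.sum_eq_zero, Finset.sum_eq_zero] at hc
      · have h1 : ℓ + 2 - (ℓ + 1) = 1 := by omega
        have h2 : (ℓ + 2).choose (ℓ + 1) = ℓ + 2 := Nat.choose_succ_self_right (ℓ + 1)
        rw [h1, h2] at hc
        simp only [pow_one, if_neg (by omega : ¬ ℓ + 1 = ℓ + 2),
          if_neg (by omega : ¬ ℓ + 1 = 0), add_zero, zero_add, sub_zero] at hc
        push_cast at hc
        exact hr (by
          have := mul_eq_zero.mp hc
          tauto)
      · intro j _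
        rw [if_neg (by omega : ¬ ℓ + 1 = (j : ℕ) + 1), mul_zero]
      · intro j _
        rw [Nat.choose_eq_zero_of_lt (by omega : (j : ℕ) + 1 < ℓ + 1)]
        simp
  · -- degree bound
    rw [Polynomial.natDegree_le_iff_coeff_eq_zero]
    intro k hk
    rw [hg]
    simp only [coeff_sub, coeff_add, coeff_X_add_C_pow, finset_sum_coeff,
      coeff_C_mul, coeff_X_pow, coeff_C]
    rw [Finset.sum_eq_zero, Finset.sum_eq_zero]
    · rw [if_neg (by omega : ¬ k = 0)]
      by_cases hk2 : k = ℓ + 2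
      · subst hk2
        simp [Nat.choose_self]
      · rw [Nat.choose_eq_zero_of_lt (by omega : ℓ + 2 < k), if_neg hk2]
        simp
    · intro j _
      rw [if_neg (by omega : ¬ k = (j : ℕ) + 1), mul_zero]
    · intro j _
      rw [Nat.choose_eq_zero_of_lt (by omega : (j : ℕ) + 1 < k)]
      simp
end

section
/- Let F be a field, and let f_1, ..., f_v ∈ F[x_1, ..., x_w] be defined by f_i(x) = Σ_{j=1}^{w} A_{i,j} x_j^{d_j}, where d_1 > d_2 > ... > d_w ≥ 1 are integers and A is a v × w matrix over F all of whose r × r minors are nonzero for 1 ≤ r ≤ min(v,w). Suppose J ⊆ {1,...,w} has |J| = v and for each j ∈ J the map x ↦ x^{d_j} is a bijection on F (e.g. F finite of order q with gcd(d_j, q−1) = 1). Then for every assignment of values (x_j)_{j ∉ J} ∈ F^{w−v}, there is exactly one assignment of (x_j)_{j ∈ J} making f_1(x) = ... = f_v(x) = 0. In particular the common zero set V_F(f_1, ..., f_v) ⊆ F^w has exactly |F|^{w−v} elements. -/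
open Finset

/-- Dvir–Lovett bijection: for `f_i(x) = ∑_j A_{i,j} x_j^{d_j}` with `A` strongly regular
and the power maps `x ↦ x^{d_j}` bijective for `j ∈ J` (`|J| = v`), every assignment of the
coordinates outside `J` extends uniquely to a common zero of `f_1, …, f_v`; hence the common
zero set in `F^w` has exactly `|F|^{w−v}` elements. -/
theorem stmt_6 (F : Type*) [Field F] [Fintype F] (v w : ℕ) (hvw : v ≤ w)
    (d : Fin w → ℕ) (hd1 : ∀ j, 1 ≤ d j) (hdanti : StrictAnti d)
    (A : Matrix (Fin v) (Fin w) F)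
    (hreg : ∀ (r : ℕ), 1 ≤ r → r ≤ v →
      ∀ (ι : Fin r ↪ Fin v) (κ : Fin r ↪ Fin w),
        (A.submatrix ι κ).det ≠ 0)
    (J : Finset (Fin w)) (hJ : J.card = v)
    (hbij : ∀ j ∈ J, Function.Bijective (fun x : F => x ^ d j)) :
    (∀ g : Fin w → F, ∃! x : Fin w → F,
      (∀ j ∉ J, x j = g j) ∧ ∀ i : Fin v, ∑ j : Fin w, A i j * x j ^ d j = 0) ∧
    {x : Fin w → F | ∀ i : Fin v, ∑ j : Fin w, A i j * x j ^ d j = 0}.ncard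
      = Fintype.card F ^ (w - v) := by
  classical
  set σ := J.orderIsoOfFin hJ with hσ
  set κ : Fin v → Fin w := fun i => (σ i : Fin w) with hκdef
  have hκmem : ∀ i, κ i ∈ J := fun i => (σ i).2
  have hκinj : Function.Injective κ :=
    fun a b h => σ.injective (Subtype.ext h)
  set M : Matrix (Fin v) (Fin v) F := A.submatrix id κ with hMdef
  have hMdet : M.det ≠ 0 := by
    rcases Nat.eq_zero_or_pos v with hv | hv
    · haveI : IsEmpty (Fin v) := ⟨fun i => absurd i.2 (by omega)⟩
      rw [Matrix.det_isEmpty]; exact one_ne_zero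
    · have := hreg v hv le_rfl (Function.Embedding.refl _) ⟨κ, hκinj⟩
      exact this
  have hM : IsUnit M.det := isUnit_iff_ne_zero.mpr hMdet
  -- sum over J as sum over Fin v
  have hsumJ : ∀ f : Fin w → F, ∑ j ∈ J, f j = ∑ i : Fin v, f (κ i) := by
    intro f
    rw [← Finset.sum_attach J f]
    exact (Equiv.sum_comp σ.toEquiv (fun a : J => f a)).symm
  -- the key existence-uniqueness statement
  have key : ∀ g : Fin w → F, ∃! x : Fin w → F,
      (∀ j ∉ J, x j = g j) ∧ ∀ i : Fin v, ∑ j : Fin w, A i j * x j ^ d j = 0 := by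
    intro g
    set b : Fin v → F := fun i => -∑ j ∈ Jᶜ, A i j * g j ^ d j with hb
    have hsplit : ∀ x : Fin w → F, (∀ j ∉ J, x j = g j) →
        ((∀ i : Fin v, ∑ j : Fin w, A i j * x j ^ d j = 0) ↔
          M.mulVec (fun i' => x (κ i') ^ d (κ i')) = b) := by
      intro x hx
      have hc : ∀ i : Fin v, ∑ j : Fin w, A i j * x j ^ d j
          = M.mulVec (fun i' => x (κ i') ^ d (κ i')) i - b i := by
        intro i
        have h1 : ∑ j : Fin w, A i j * x j ^ d j
            = ∑ j ∈ J, A i j * x j ^ d j + ∑ j ∈ Jᶜ, A i j * x j ^ d j :=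
          (Finset.sum_add_sum_compl J _).symm
        have h2 : ∑ j ∈ Jᶜ, A i j * x j ^ d j = ∑ j ∈ Jᶜ, A i j * g j ^ d j := by
          refine Finset.sum_congr rfl fun j hj => ?_
          rw [hx j (Finset.mem_compl.mp hj)]
        rw [h1, h2, hsumJ (fun j => A i j * x j ^ d j)]
        simp [Matrix.mulVec, dotProduct, hb, hMdef, sub_neg_eq_add]
      constructor
      · intro h; funext i
        have := hc i; rw [h i] at this
        exact sub_eq_zero.mp this.symm
      · intro h i; rw [hc i, h]; ring
    -- the solution vector
    set y : Fin v → F := M⁻¹.mulVec b with hy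
    have hMy : M.mulVec y = b := by
      rw [hy, Matrix.mulVec_mulVec, Matrix.mul_nonsing_inv _ hM, Matrix.one_mulVec]
    -- roots
    have hroot : ∀ i : Fin v, ∃ t : F, t ^ d (κ i) = y i := fun i =>
      (hbij (κ i) (hκmem i)).surjective (y i)
    set x0 : Fin w → F := fun j =>
      if h : j ∈ J then (hroot (σ.symm ⟨j, h⟩)).choose else g j with hx0
    have hx0J : ∀ i : Fin v, x0 (κ i) = (hroot i).choose := by
      intro i
      have h : κ i ∈ J := hκmem i
      have : σ.symm ⟨κ i, h⟩ = i := by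
        rw [show (⟨κ i, h⟩ : J) = σ i from rfl, OrderIso.symm_apply_apply]
      simp only [hx0, dif_pos h, this]
    have hx0pow : ∀ i : Fin v, x0 (κ i) ^ d (κ i) = y i := by
      intro i; rw [hx0J i]; exact (hroot i).choose_spec
    refine ⟨x0, ⟨fun j hj => by simp only [hx0, dif_neg hj], ?_⟩, ?_⟩
    · rw [hsplit x0 (fun j hj => by simp only [hx0, dif_neg hj])]
      funext i'
      have : (fun i' => x0 (κ i') ^ d (κ i')) = y := funext hx0pow
      rw [this, hMy]
    · rintro x ⟨hxg, hxz⟩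
      have hxy : (fun i' => x (κ i') ^ d (κ i')) = y := by
        have h := (hsplit x hxg).mp hxz
        have : M⁻¹.mulVec (M.mulVec (fun i' => x (κ i') ^ d (κ i'))) = M⁻¹.mulVec b := by
          rw [h]
        rwa [Matrix.mulVec_mulVec, Matrix.nonsing_inv_mul _ hM, Matrix.one_mulVec] at this
      funext j
      by_cases hj : j ∈ J
      · set i := σ.symm ⟨j, hj⟩ with hi
        have hji : j = κ i := by
          have := σ.apply_symm_apply ⟨j, hj⟩
          simp only [hi, hκdef]
          exact congrArg Subtype.val this.symm
        rw [hji]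
        apply (hbij (κ i) (hκmem i)).injective
        show x (κ i) ^ d (κ i) = x0 (κ i) ^ d (κ i)
        rw [hx0pow i, ← hxy]
      · rw [hxg j hj]; simp [hx0, hj]
  refine ⟨key, ?_⟩
  -- cardinality
  set S := {x : Fin w → F | ∀ i : Fin v, ∑ j : Fin w, A i j * x j ^ d j = 0} with hS
  have hcard : Nat.card S = Nat.card ((Jᶜ : Finset (Fin w)) → F) := by
    refine Nat.card_congr (Equiv.ofBijective
      (fun x => fun j => (x : Fin w → F) j) ⟨?_, ?_⟩)
    · rintro ⟨x, hx⟩ ⟨x', hx'⟩ h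
      simp only [Subtype.mk.injEq]
      have hxx' : ∀ j ∉ J, x' j = x j := by
        intro j hj
        exact (congrFun h ⟨j, Finset.mem_compl.mpr hj⟩).symm
      exact (key x).unique ⟨fun j _ => rfl, hx⟩ ⟨hxx', hx'⟩
    · intro h
      obtain ⟨x, ⟨hxg, hxz⟩, -⟩ := key (fun j => if hj : j ∈ Jᶜ then h ⟨j, hj⟩ else 0)
      refine ⟨⟨x, hxz⟩, ?_⟩
      funext j
      have hj' : (j : Fin w) ∉ J := Finset.mem_compl.mp j.2
      simp [hxg j hj', dif_pos j.2]
  rw [Set.ncard_eq_toFinset_card', Set.toFinset_card]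
  have : Fintype.card S = Nat.card S := (Nat.card_eq_fintype_card).symm
  rw [this, hcard, Nat.card_eq_fintype_card, Fintype.card_fun, Fintype.card_coe,
    Finset.card_compl, hJ, Fintype.card_fin]
end

section
/- Let F_q be a finite field, γ a primitive element, k ≥ v ≥ 1, and let B_0(X) ∈ F_q[X] be a nonzero polynomial of degree at most v−1. Consider the k × k lower-triangular matrix T with diagonal entries T_{i,i} = B_0(γ^{i−1}) for i = 1, ..., k (and arbitrary entries below the diagonal). Then T has rank at least k − (v−1), and hence the solution set of T f = c (for any c ∈ F_q^k) is either empty or an affine subspace of F_q^k of dimension at most v−1. -/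
open Polynomial

/-- Selecting rows and columns of a matrix can be written as multiplication by 0/1 matrices. -/
lemma submatrix_eq_mul_mul {F : Type*} [Field F] {k : ℕ} [DecidableEq F]
    {m : ℕ} (A : Matrix (Fin k) (Fin k) F) (f : Fin m → Fin k) :
    A.submatrix f f =
      ((1 : Matrix (Fin k) (Fin k) F).submatrix f id) * A *
        ((1 : Matrix (Fin k) (Fin k) F).submatrix id f) := by
  ext i j
  simp [Matrix.mul_apply, Matrix.one_apply, Finset.sum_ite_eq, Finset.sum_ite_eq',
    eq_comm]

lemma rank_submatrix_le' {F : Type*} [Field F] {k m : ℕ} [DecidableEq F]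
    (A : Matrix (Fin k) (Fin k) F) (f : Fin m → Fin k) :
    (A.submatrix f f).rank ≤ A.rank := by
  rw [submatrix_eq_mul_mul A f]
  calc (((1 : Matrix (Fin k) (Fin k) F).submatrix f id) * A *
        ((1 : Matrix (Fin k) (Fin k) F).submatrix id f)).rank
      ≤ (((1 : Matrix (Fin k) (Fin k) F).submatrix f id) * A).rank :=
        Matrix.rank_mul_le_left _ _
    _ ≤ A.rank := Matrix.rank_mul_le_right _ _

/-- Rank bound in linear-algebraic FRS list decoding: a `k × k` lower-triangular matrix
whose `i`-th diagonal entry is `B₀(γ^{i})`, for `B₀ ≠ 0` of degree at most `v−1` and `γ` a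
primitive element with `k ≤ q−1`, has rank at least `k − (v−1)`; hence the solution set of
`T f = c` is empty or a coset of the kernel, of dimension at most `v−1`. -/
theorem stmt_11 (F : Type*) [Field F] [Fintype F] [DecidableEq F]
    (γ : Fˣ) (hγ : ∀ u : Fˣ, u ∈ Subgroup.zpowers γ)
    (k v : ℕ) (hv : 1 ≤ v) (hkv : v ≤ k) (hkq : k ≤ Fintype.card F - 1)
    (B0 : F[X]) (hB0 : B0 ≠ 0) (hdeg : B0.natDegree ≤ v - 1)
    (T : Matrix (Fin k) (Fin k) F)
    (hdiag : ∀ i : Fin k, T i i = B0.eval ((γ : F) ^ (i : ℕ)))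
    (htri : ∀ i j : Fin k, i < j → T i j = 0) :
    k - (v - 1) ≤ T.rank ∧
    ∀ c : Fin k → F,
      {f : Fin k → F | T.mulVec f = c} = ∅ ∨
      ∃ f0 : Fin k → F, T.mulVec f0 = c ∧
        {f : Fin k → F | T.mulVec f = c}
          = (fun u => f0 + u) '' (LinearMap.ker T.mulVecLin : Set (Fin k → F)) ∧
        Module.finrank F (LinearMap.ker T.mulVecLin) ≤ v - 1 := by
  -- γ has order q - 1
  have horder : orderOf γ = Fintype.card F - 1 := by
    rw [orderOf_eq_card_of_forall_mem_zpowers hγ, Nat.card_eq_fintype_card,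
      Fintype.card_units]
  -- the powers γ^i, i < k, are distinct in F
  have hinj : ∀ i j : Fin k, ((γ : F) ^ (i : ℕ)) = ((γ : F) ^ (j : ℕ)) → i = j := by
    intro i j hij
    have : (γ ^ (i : ℕ) : Fˣ) = γ ^ (j : ℕ) := by
      ext; push_cast; exact hij
    have := pow_injOn_Iio_orderOf (x := γ)
      (by rw [horder]; exact lt_of_lt_of_le i.2 hkq)
      (by rw [horder]; exact lt_of_lt_of_le j.2 hkq) this
    exact Fin.ext this
  -- The set of indices with nonzero diagonal
  set S : Finset (Fin k) := Finset.univ.filter (fun i => T i i ≠ 0) with hS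
  -- complement injects into the roots of B0
  have hcompl : (Finset.univ.filter (fun i : Fin k => T i i = 0)).card ≤ v - 1 := by
    have : (Finset.univ.filter (fun i : Fin k => T i i = 0)).card ≤
        B0.roots.toFinset.card := by
      refine Finset.card_le_card_of_injOn (fun i => (γ : F) ^ (i : ℕ)) ?_ ?_
      · intro i hi
        simp only [Finset.mem_coe, Finset.mem_filter, Finset.mem_univ, true_and] at hi
        rw [hdiag i] at hi
        simp only [Finset.mem_coe, Multiset.mem_toFinset, mem_roots hB0, IsRoot.def]
        exact hi
      · intro i _ j _ hij
        exact hinj i j hij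
    refine this.trans ?_
    calc B0.roots.toFinset.card ≤ Multiset.card B0.roots := B0.roots.toFinset_card_le
      _ ≤ B0.natDegree := B0.card_roots' 
      _ ≤ v - 1 := hdeg
  have hScard : k - (v - 1) ≤ S.card := by
    have := Finset.card_filter_add_card_filter_not (s := Finset.univ)
      (p := fun i : Fin k => T i i = 0)
    simp only [Finset.card_univ, Fintype.card_fin] at this
    have hSc : S.card = (Finset.univ.filter (fun i : Fin k => ¬ T i i = 0)).card := rfl
    omega
  -- rank bound via the S × S submatrix
  have hrank : k - (v - 1) ≤ T.rank := by
    set f := S.orderEmbOfFin (rfl : S.card = S.card) with hf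
    have hmem : ∀ i, f i ∈ S := fun i => S.orderEmbOfFin_mem rfl i
    have hdetA : (T.submatrix f f).det ≠ 0 := by
      rw [Matrix.det_of_lowerTriangular _ ?_]
      · apply Finset.prod_ne_zero_iff.mpr
        intro i _
        have := hmem i
        simp only [hS, Finset.mem_filter] at this
        exact this.2
      · intro i j hij
        exact htri _ _ (f.strictMono hij)
    have hrankA : (T.submatrix f f).rank = S.card := by
      rw [Matrix.rank_of_isUnit _ ((Matrix.isUnit_iff_isUnit_det _).mpr
        (isUnit_iff_ne_zero.mpr hdetA)), Fintype.card_fin]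
    calc k - (v - 1) ≤ S.card := hScard
      _ = (T.submatrix f f).rank := hrankA.symm
      _ ≤ T.rank := rank_submatrix_le' T f
  refine ⟨hrank, ?_⟩
  -- kernel dimension
  have hker : Module.finrank F (LinearMap.ker T.mulVecLin) ≤ v - 1 := by
    have hrn := LinearMap.finrank_range_add_finrank_ker (T.mulVecLin)
    rw [Module.finrank_pi] at hrn
    have hTr : T.rank = Module.finrank F (LinearMap.range T.mulVecLin) := rfl
    have hle := Matrix.rank_le_card_width T
    simp only [Fintype.card_fin] at hrn hle
    omega
  intro c
  by_cases hne : {f : Fin k → F | T.mulVec f = c} = ∅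
  · exact Or.inl hne
  · right
    obtain ⟨f0, hf0⟩ := Set.nonempty_iff_ne_empty.mpr hne
    refine ⟨f0, hf0, ?_, hker⟩
    ext g
    simp only [Set.mem_setOf_eq, Set.mem_image, SetLike.mem_coe, LinearMap.mem_ker]
    constructor
    · intro hg
      refine ⟨g - f0, ?_, by abel⟩
      rw [Matrix.mulVecLin_apply, Matrix.mulVec_sub, hg, hf0, sub_self]
    · rintro ⟨u, hu, rfl⟩
      rw [Matrix.mulVec_add, hf0]
      rw [Matrix.mulVecLin_apply] at hu
      rw [hu, add_zero]
end
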